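/- Assume the weight matrix ω is symmetric. Then the energy E is differentiable on ℝ^N with partial derivatives ∂E/∂x_i (x) = −F'(x_i)·u_i(x) for all i, and consequently a point x ∈ ℝ^N is a critical point of E (∇E(x) = 0) if and only if x is an equilibrium of the autonomous Hopfield network (u(x) = 0). -/

import Mathlib

open Real

noncomputable def F (lam s : ℝ) : ℝ := (2 / Real.pi) * Real.arctan (lam * Real.pi * s / 2)

noncomputable def Fd (lam s : ℝ) : ℝ := lam / (1 + (lam * Real.pi * s / 2) ^ 2)

noncomputable def G (lam s : ℝ) : ℝ := (2 / (lam * Real.pi ^ 2)) * Real.log (1 + (lam * Real.pi * s / 2) ^ 2)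

noncomputable def u (N : ℕ) (lam g : ℝ) (ω : Fin N → Fin N → ℝ) (x : Fin N → ℝ) (i : Fin N) : ℝ :=
  -x i + g * ∑ j, F lam (ω i j) * F lam (x j)

noncomputable def E (N : ℕ) (lam g : ℝ) (ω : Fin N → Fin N → ℝ) (x : Fin N → ℝ) : ℝ :=
  ∑ i, G lam (x i) - (g / 2) * ∑ i, ∑ j, F lam (ω i j) * F lam (x i) * F lam (x j)

lemma hasDerivAt_F (lam s : ℝ) : HasDerivAt (F lam) (Fd lam s) s := by
  have h1 : HasDerivAt (fun t : ℝ => lam * Real.pi * t / 2) (lam * Real.pi / 2) s := by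
    simpa using ((hasDerivAt_id s).const_mul (lam * Real.pi)).div_const 2
  have h2 := (Real.hasDerivAt_arctan (lam * Real.pi * s / 2)).comp s h1
  have h3 := h2.const_mul (2 / Real.pi)
  have hq : (0:ℝ) < 1 + (lam * Real.pi * s / 2) ^ 2 := by positivity
  refine h3.congr_deriv ?_
  unfold Fd
  have hpi := Real.pi_ne_zero
  field_simp

lemma hasDerivAt_G (lam : ℝ) (hlam : lam ≠ 0) (s : ℝ) :
    HasDerivAt (G lam) (s * Fd lam s) s := by
  have h1 : HasDerivAt (fun t : ℝ => lam * Real.pi * t / 2) (lam * Real.pi / 2) s := by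
    simpa using ((hasDerivAt_id s).const_mul (lam * Real.pi)).div_const 2
  have h2 : HasDerivAt (fun t : ℝ => 1 + (lam * Real.pi * t / 2) ^ 2)
      (2 * (lam * Real.pi * s / 2) ^ 1 * (lam * Real.pi / 2)) s := (h1.pow 2).const_add 1
  have hq : (0:ℝ) < 1 + (lam * Real.pi * s / 2) ^ 2 := by positivity
  have h3 := (Real.hasDerivAt_log (ne_of_gt hq)).comp s h2
  have h4 := h3.const_mul (2 / (lam * Real.pi ^ 2))
  refine h4.congr_deriv ?_
  unfold Fd
  have hpi := Real.pi_ne_zero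
  field_simp

lemma Fd_pos (lam : ℝ) (hlam : 0 < lam) (s : ℝ) : 0 < Fd lam s := by
  unfold Fd; positivity

/-- For symmetric ω, the energy E has partial derivatives
∂E/∂x_i = −F'(x_i)·u_i(x), and x is a critical point of E iff x is an equilibrium. -/
theorem hopfield_energy_gradient (N : ℕ) (hN : 1 ≤ N) (lam g : ℝ)
    (hlam : 0 < lam) (hg : 0 < g) (ω : Fin N → Fin N → ℝ)
    (hsym : ∀ i j, ω i j = ω j i) :
    ∀ x : Fin N → ℝ,
      (∀ i, HasDerivAt (fun s => E N lam g ω (Function.update x i s))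
          (-(Fd lam (x i) * u N lam g ω x i)) (x i)) ∧
      ((∀ i, -(Fd lam (x i) * u N lam g ω x i) = 0) ↔ (∀ i, u N lam g ω x i = 0)) := by
  intro x
  constructor
  · intro i
    set a := Fd lam (x i) with ha
    -- derivative of each coordinate function
    have hFk : ∀ k : Fin N, HasDerivAt (fun s => F lam (Function.update x i s k))
        (if k = i then a else 0) (x i) := by
      intro k
      by_cases hk : k = i
      · subst hk
        simp only [Function.update_self, if_pos rfl]
        exact hasDerivAt_F lam (x k)
      · simp only [Function.update_of_ne hk, if_neg hk]
        exact hasDerivAt_const _ _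
    have hGk : ∀ k : Fin N, HasDerivAt (fun s => G lam (Function.update x i s k))
        (if k = i then x i * a else 0) (x i) := by
      intro k
      by_cases hk : k = i
      · subst hk
        simp only [Function.update_self, if_pos rfl]
        exact hasDerivAt_G lam (ne_of_gt hlam) (x k)
      · simp only [Function.update_of_ne hk, if_neg hk]
        exact hasDerivAt_const _ _
    have hterm : ∀ k j : Fin N,
        HasDerivAt (fun s => F lam (ω k j) * F lam (Function.update x i s k)
            * F lam (Function.update x i s j))
          (F lam (ω k j) * ((if k = i then a else 0) * F lam (x j)
            + F lam (x k) * (if j = i then a else 0))) (x i) := by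
      intro k j
      have := ((hFk k).mul (hFk j)).const_mul (F lam (ω k j))
      simp only [Function.update_eq_self] at this
      refine this.congr_of_eventuallyEq (Filter.Eventually.of_forall fun s => ?_)
      · simp only [Pi.mul_apply]; ring
    have h1 : HasDerivAt (fun s => ∑ k, G lam (Function.update x i s k))
        (∑ k : Fin N, if k = i then x i * a else 0) (x i) :=
      HasDerivAt.fun_sum fun k _ => hGk k
    have h2 : HasDerivAt (fun s => ∑ k, ∑ j, F lam (ω k j) * F lam (Function.update x i s k)
          * F lam (Function.update x i s j))
        (∑ k : Fin N, ∑ j : Fin N, F lam (ω k j) * ((if k = i then a else 0) * F lam (x j)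
            + F lam (x k) * (if j = i then a else 0))) (x i) :=
      HasDerivAt.fun_sum fun k _ => HasDerivAt.fun_sum fun j _ => hterm k j
    have h3 := h1.sub (h2.const_mul (g / 2))
    have hfun : (fun s => E N lam g ω (Function.update x i s))
        = (fun s => (∑ k, G lam (Function.update x i s k))
            - (g / 2) * ∑ k, ∑ j, F lam (ω k j) * F lam (Function.update x i s k)
              * F lam (Function.update x i s j)) := by
      funext s; simp only [E]
    rw [hfun]
    refine h3.congr_deriv ?_
    -- derivative value equality
    have e1 : (∑ k : Fin N, if k = i then x i * a else 0) = x i * a := by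
      simp
    have e2 : (∑ k : Fin N, ∑ j : Fin N, F lam (ω k j) * ((if k = i then a else 0) * F lam (x j)
            + F lam (x k) * (if j = i then a else 0)))
        = 2 * a * ∑ j, F lam (ω i j) * F lam (x j) := by
      have hsplit : ∀ k j : Fin N, F lam (ω k j) * ((if k = i then a else 0) * F lam (x j)
            + F lam (x k) * (if j = i then a else 0))
          = (if k = i then F lam (ω i j) * (a * F lam (x j)) else 0)
            + (if j = i then F lam (ω k i) * (F lam (x k) * a) else 0) := by
        intro k j
        by_cases hk : k = i <;> by_cases hj : j = i <;> simp [hk, hj] <;> ring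
      simp only [hsplit, Finset.sum_add_distrib]
      have eA : (∑ k : Fin N, ∑ j : Fin N, if k = i then F lam (ω i j) * (a * F lam (x j)) else 0)
          = ∑ j, F lam (ω i j) * (a * F lam (x j)) := by
        rw [Finset.sum_comm]
        simp [Finset.sum_ite_eq', Finset.mem_univ]
      have eB : (∑ k : Fin N, ∑ j : Fin N, if j = i then F lam (ω k i) * (F lam (x k) * a) else 0)
          = ∑ k, F lam (ω k i) * (F lam (x k) * a) := by
        simp [Finset.sum_ite_eq', Finset.mem_univ]
      rw [eA, eB]
      have eC : (∑ k : Fin N, F lam (ω k i) * (F lam (x k) * a))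
          = ∑ k, F lam (ω i k) * (F lam (x k) * a) :=
        Finset.sum_congr rfl fun k _ => by rw [hsym]
      rw [eC, ← Finset.sum_add_distrib, Finset.mul_sum]
      apply Finset.sum_congr rfl
      intro k _
      ring
    rw [e1, e2]
    simp only [u]
    ring
  · constructor
    · intro h i
      have hi := h i
      have hp := Fd_pos lam hlam (x i)
      have : Fd lam (x i) * u N lam g ω x i = 0 := by linarith [hi]
      rcases mul_eq_zero.1 this with h' | h'
      · exact absurd h' (ne_of_gt hp)
      · exact h'
    · intro h i
      rw [h i]
      ring
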